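/- The function r̃(z) = −Log(2 + (2z−1)/w(z)) is complex-differentiable on the open set ℂ∖[0,1]. -/

import Mathlib

open Complex Metric

noncomputable def wfun (z : ℂ) : ℂ := z * ((z - 1) / z) ^ ((1 : ℂ)/2)

noncomputable def rTilde (z : ℂ) : ℂ := -Complex.log (2 + (2 * z - 1) / wfun z)

lemma aux_real (x : ℝ) (hx : x < 0 ∨ 1 < x) (t : ℝ) (ht : t < 0)
    (heq : 2 * (x:ℂ) - 1 = ((t:ℂ) - 2) * wfun (x:ℂ)) : False := by
  have hb : 0 < (x - 1)/x := by
    rcases hx with h|h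
    · apply div_pos_of_neg_of_neg <;> linarith
    · apply div_pos <;> linarith
  have hcast : ((x:ℂ) - 1) / (x:ℂ) = (((x-1)/x : ℝ) : ℂ) := by push_cast; ring
  have hhalf : ((1:ℂ)/2) = (((1:ℝ)/2 : ℝ) : ℂ) := by norm_num
  have hw : wfun (x:ℂ) = ((x * ((x-1)/x) ^ ((1:ℝ)/2) : ℝ) : ℂ) := by
    rw [wfun, hcast, hhalf, ← Complex.ofReal_cpow hb.le]
    push_cast; ring
  set W : ℝ := x * ((x-1)/x) ^ ((1:ℝ)/2) with hW
  have hreq : 2 * x - 1 = (t - 2) * W := by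
    rw [hw] at heq
    exact_mod_cast heq
  have hrpos : 0 < ((x-1)/x) ^ ((1:ℝ)/2) := Real.rpow_pos_of_pos hb _
  rcases hx with h|h
  · have hWneg : W < 0 := mul_neg_of_neg_of_pos h hrpos
    nlinarith
  · have hWpos : 0 < W := mul_pos (by linarith) hrpos
    nlinarith

lemma wfun_sq (z : ℂ) (hz0 : z ≠ 0) (hz1 : z ≠ 1) : wfun z ^ 2 = z * (z - 1) := by
  have hu : (z - 1)/z ≠ 0 := div_ne_zero (sub_ne_zero.mpr hz1) hz0
  have h2 : (((z-1)/z) ^ ((1:ℂ)/2))^2 = (z-1)/z := by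
    rw [sq, ← Complex.cpow_add _ _ hu]
    norm_num
  rw [wfun, mul_pow, h2]
  field_simp

lemma key_mem (z : ℂ) (hz0 : z ≠ 0) (hz1 : z ≠ 1) (hw0 : wfun z ≠ 0) :
    2 + (2 * z - 1) / wfun z ∈ Complex.slitPlane := by
  by_contra hcon
  rw [Complex.mem_slitPlane_iff] at hcon
  push_neg at hcon
  obtain ⟨hre, him⟩ := hcon
  set t : ℝ := (2 + (2 * z - 1) / wfun z).re with ht
  have hgt : 2 + (2 * z - 1) / wfun z = ((t : ℝ) : ℂ) := by
    apply Complex.ext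
    · simp [ht]
    · simp [him]
  have hdiv : (2 * z - 1) / wfun z = (t:ℂ) - 2 := by linear_combination hgt
  have heq : 2 * z - 1 = ((t:ℂ) - 2) * wfun z := (div_eq_iff hw0).mp hdiv
  have hsq := wfun_sq z hz0 hz1
  have hone : (((t:ℂ)-2)^2 - 4) * wfun z ^ 2 = 1 := by
    linear_combination (-(2*z-1) - ((t:ℂ)-2)*wfun z) * heq - 4*hsq
  have ht0 : t < 0 := by
    rcases hre.lt_or_eq with h|h
    · exact h
    · rw [h] at hone; norm_num at hone
  set a : ℝ := (t-2)^2 - 4 with ha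
  have hapos : 0 < a := by nlinarith
  have haC : ((a:ℝ):ℂ) ≠ 0 := by exact_mod_cast hapos.ne'
  have hzz : z * (z - 1) = ((1/a : ℝ):ℂ) := by
    rw [← hsq]
    rw [Complex.ofReal_div, Complex.ofReal_one, eq_div_iff haC]
    rw [ha]
    push_cast
    linear_combination hone
  have hp : 0 < a⁻¹ := by positivity
  have him2 : z.im * (2*z.re - 1) = 0 := by
    have h1 := congrArg Complex.im hzz
    simp [Complex.mul_im, Complex.sub_im, Complex.sub_re] at h1
    nlinarith [h1]
  have hre2 : z.re*(z.re-1) - z.im*z.im = a⁻¹ := by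
    have h1 := congrArg Complex.re hzz
    simp [Complex.mul_re, Complex.sub_im, Complex.sub_re, one_div] at h1
    linarith [h1]
  rcases mul_eq_zero.mp him2 with hy | hx2
  · have hzr : z = ((z.re : ℝ) : ℂ) := Complex.ext (by simp) (by simp [hy])
    have hxout : z.re < 0 ∨ 1 < z.re := by
      by_contra hc
      push_neg at hc
      rw [hy] at hre2
      nlinarith [hc.1, hc.2, hp, hre2]
    rw [hzr] at heq
    exact aux_real z.re hxout t ht0 heq
  · have hx : z.re = 1/2 := by linarith
    rw [hx] at hre2
    nlinarith [hre2, hp, sq_nonneg z.im]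

/-- `r̃` is complex-differentiable on `ℂ∖[0,1]`. -/
theorem stmt_9 :
    DifferentiableOn ℂ rTilde (Complex.ofReal '' Set.Icc (0:ℝ) 1)ᶜ := by
  intro z hz
  have hz' : z ∉ Complex.ofReal '' Set.Icc (0:ℝ) 1 := hz
  have hz0 : z ≠ 0 := by
    intro h
    exact hz' ⟨0, by simp, by simp [h]⟩
  have hz1 : z ≠ 1 := by
    intro h
    exact hz' ⟨1, by simp, by simp [h]⟩
  have hu : (z - 1)/z ≠ 0 := div_ne_zero (sub_ne_zero.mpr hz1) hz0
  have hzslit : (z - 1)/z ∈ Complex.slitPlane := by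
    by_contra hcon
    rw [Complex.mem_slitPlane_iff] at hcon
    push_neg at hcon
    obtain ⟨hre, him⟩ := hcon
    set t : ℝ := ((z - 1)/z).re with ht
    have hgt : (z - 1)/z = ((t : ℝ) : ℂ) := by
      apply Complex.ext
      · simp [ht]
      · simp [him]
    have heq : z - 1 = (t:ℂ) * z := (div_eq_iff hz0).mp hgt
    have h1t : ((1:ℂ) - t) ≠ 0 := by
      intro h
      have : (1:ℝ) - t = 0 := by exact_mod_cast congrArg Complex.re h
      linarith
    have hzval : z = ((1/(1-t) : ℝ) : ℂ) := by
      have h1tR : (1:ℝ) - t ≠ 0 := by intro h; apply h1t; exact_mod_cast congrArg (fun r : ℝ => (r:ℂ)) h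
      push_cast
      rw [eq_div_iff (by exact_mod_cast h1tR)]
      linear_combination heq
    apply hz'
    refine ⟨1/(1-t), ⟨?_, ?_⟩, hzval.symm⟩
    · exact le_of_lt (div_pos one_pos (by linarith))
    · rw [div_le_one (by linarith)]; linarith
  have hw0 : wfun z ≠ 0 := by
    apply mul_ne_zero hz0
    rw [Complex.cpow_def_of_ne_zero hu]
    exact Complex.exp_ne_zero _
  apply DifferentiableAt.differentiableWithinAt
  have hwdiff : DifferentiableAt ℂ wfun z := by
    have : DifferentiableAt ℂ (fun w : ℂ => ((w - 1)/w) ^ ((1:ℂ)/2)) z := by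
      apply DifferentiableAt.cpow
      · exact (differentiableAt_fun_id.sub_const 1).div differentiableAt_fun_id hz0
      · exact differentiableAt_const _
      · exact hzslit
    exact differentiableAt_fun_id.mul this
  have hgdiff : DifferentiableAt ℂ (fun w : ℂ => 2 + (2 * w - 1) / wfun w) z := by
    apply (differentiableAt_const 2).add
    exact ((differentiableAt_fun_id.const_mul 2).sub_const 1).div hwdiff hw0
  have := (hgdiff.clog (key_mem z hz0 hz1 hw0)).neg
  exact this
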